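/- arXiv:0911.1272 — 2 statements merged into one kernel-verified Lean document; each statement's English description precedes it below -/
import Mathlib

section
/- For any ring R, every Gorenstein projective R-module with finite injective dimension is projective. -/
universe u

open CategoryTheory

/-- `extVanish R n M N` asserts that `Ext_R^n(M, N) = 0`. -/
def extVanish (R : Type u) [Ring R] (n : ℕ) (M N : ModuleCat.{u} R) : Prop :=
  letI := HasDerivedCategory.standard (ModuleCat.{u} R)
  letI : HasExt.{u + 1} (ModuleCat.{u} R) := hasExt_of_hasDerivedCategory _
  Subsingleton (Abelian.Ext M N n)

/-- A module `G` is Gorenstein projective if there is an exact sequence of projective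
modules `⋯ → P i → P (i+1) → ⋯` with `G ≅ Im (d 0)` which stays exact after applying
`Hom_R(−, Q)` for every projective module `Q`. -/
def IsGorensteinProjective (R : Type u) [Ring R] (G : ModuleCat.{u} R) : Prop :=
  ∃ (P : ℤ → ModuleCat.{u} R) (d : ∀ i : ℤ, P i →ₗ[R] P (i + 1)),
    (∀ i, Module.Projective R (P i)) ∧
    (∀ i, LinearMap.range (d i) = LinearMap.ker (d (i + 1))) ∧
    Nonempty (G ≃ₗ[R] LinearMap.range (d 0)) ∧
    ∀ (Q : ModuleCat.{u} R), Module.Projective R Q →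
      ∀ (i : ℤ) (f : P (i + 1) →ₗ[R] Q), f ∘ₗ d i = 0 →
        ∃ g : P (i + 1 + 1) →ₗ[R] Q, g ∘ₗ d (i + 1) = f

/-- A module `G` is Gorenstein injective if there is an exact sequence of injective
modules `⋯ → I i → I (i+1) → ⋯` with `G ≅ Im (d 0)` which stays exact after applying
`Hom_R(E, −)` for every injective module `E`. -/
def IsGorensteinInjective (R : Type u) [Ring R] (G : ModuleCat.{u} R) : Prop :=
  ∃ (I : ℤ → ModuleCat.{u} R) (d : ∀ i : ℤ, I i →ₗ[R] I (i + 1)),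
    (∀ i, Module.Injective R (I i)) ∧
    (∀ i, LinearMap.range (d i) = LinearMap.ker (d (i + 1))) ∧
    Nonempty (G ≃ₗ[R] LinearMap.range (d 0)) ∧
    ∀ (E : ModuleCat.{u} R), Module.Injective R E →
      ∀ (i : ℤ) (f : E →ₗ[R] I (i + 1)), d (i + 1) ∘ₗ f = 0 →
        ∃ g : E →ₗ[R] I i, d i ∘ₗ g = f

/-- `projDimLE R n M` means that `M` admits a projective resolution of length at most `n`,
i.e. the projective dimension of `M` is at most `n`. -/
def projDimLE (R : Type u) [Ring R] : ℕ → ModuleCat.{u} R → Prop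
  | 0, M => Module.Projective R M
  | n + 1, M => ∃ (K P : ModuleCat.{u} R) (f : K →ₗ[R] P) (g : P →ₗ[R] M),
      Module.Projective R P ∧ Function.Injective f ∧ Function.Surjective g ∧
      LinearMap.range f = LinearMap.ker g ∧ projDimLE R n K

/-- `injDimLE R n M` means that `M` admits an injective resolution of length at most `n`,
i.e. the injective dimension of `M` is at most `n`. -/
def injDimLE (R : Type u) [Ring R] : ℕ → ModuleCat.{u} R → Prop
  | 0, M => Module.Injective R M
  | n + 1, M => ∃ (I C : ModuleCat.{u} R) (f : M →ₗ[R] I) (g : I →ₗ[R] C),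
      Module.Injective R I ∧ Function.Injective f ∧ Function.Surjective g ∧
      LinearMap.range f = LinearMap.ker g ∧ injDimLE R n C


/-- Key dimension-shifting lemma: if `M` has injective dimension at most `n`, then any
linear map from the image of a differential of an exact complex of projectives extends to
the next term of the complex. -/
lemma extend_of_injDimLE (R : Type u) [Ring R] (P : ℤ → ModuleCat.{u} R)
    (d : ∀ i : ℤ, P i →ₗ[R] P (i + 1))
    (hproj : ∀ i, Module.Projective R (P i))
    (hex : ∀ i, LinearMap.range (d i) = LinearMap.ker (d (i + 1))) :
    ∀ (n : ℕ) (M : ModuleCat.{u} R), injDimLE R n M →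
      ∀ (i : ℤ) (φ : ↥(LinearMap.range (d i)) →ₗ[R] M),
        ∃ ψ : P (i + 1) →ₗ[R] M, ψ ∘ₗ (LinearMap.range (d i)).subtype = φ := by
  intro n
  induction n with
  | zero =>
    intro M hM i φ
    obtain ⟨ψ, hψ⟩ := hM.out (LinearMap.range (d i)).subtype Subtype.coe_injective φ
    exact ⟨ψ, LinearMap.ext fun x => hψ x⟩
  | succ n ih =>
    intro M hM i φ
    obtain ⟨I, C, f, g, hIinj, hfinj, hgsurj, hfg, hC⟩ := hM
    -- extend `f ∘ φ` to `ψ : P (i+1) → I` using injectivity of `I`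
    obtain ⟨ψ, hψ⟩ := hIinj.out (LinearMap.range (d i)).subtype Subtype.coe_injective
      (f ∘ₗ φ)
    -- `g ∘ ψ` kills `range (d i) = ker (d (i+1))`, so it factors through `range (d (i+1))`
    have hker : LinearMap.ker (d (i + 1)) ≤ LinearMap.ker (g ∘ₗ ψ) := by
      intro x hx
      rw [← hex i] at hx
      have hx' : ψ x = f (φ ⟨x, hx⟩) := by simpa using hψ ⟨x, hx⟩
      have : g (ψ x) = g (f (φ ⟨x, hx⟩)) := by rw [hx']
      have hgf : g (f (φ ⟨x, hx⟩)) = 0 := by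
        have : f (φ ⟨x, hx⟩) ∈ LinearMap.ker g := hfg ▸ LinearMap.mem_range_self _ _
        exact this
      simpa [this] using hgf
    set χ : ↥(LinearMap.range (d (i + 1))) →ₗ[R] C :=
      ((LinearMap.ker (d (i + 1))).liftQ (g ∘ₗ ψ) hker) ∘ₗ
        ((d (i + 1)).quotKerEquivRange.symm : _ →ₗ[R] _) with hχ
    have hχ_apply : ∀ x : P (i + 1), χ ((d (i + 1)).rangeRestrict x) = g (ψ x) := by
      intro x
      have h1 : (d (i + 1)).quotKerEquivRange.symm ((d (i + 1)).rangeRestrict x)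
          = Submodule.Quotient.mk x := by
        apply (d (i + 1)).quotKerEquivRange.injective
        rw [LinearEquiv.apply_symm_apply]
        apply Subtype.ext
        rw [LinearMap.quotKerEquivRange_apply_mk]
        rfl
      simp [hχ, h1]
    -- extend χ to `P (i+2)` using the induction hypothesis on `C`
    obtain ⟨θ, hθ⟩ := ih C hC (i + 1) χ
    -- lift θ along the surjection g using projectivity of `P (i+2)`
    have := hproj (i + 1 + 1)
    obtain ⟨θ', hθ'⟩ := Module.projective_lifting_property g θ hgsurj
    -- the corrected map `ψ - θ' ∘ d (i+1)` lands in `range f = ker g`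
    set u : P (i + 1) →ₗ[R] I := ψ - θ' ∘ₗ d (i + 1) with hu
    have hu_range : ∀ x, u x ∈ LinearMap.range f := by
      intro x
      rw [hfg, LinearMap.mem_ker]
      have h4 : θ (d (i + 1) x) = g (ψ x) := by
        have h2 := DFunLike.congr_fun hθ ((d (i + 1)).rangeRestrict x)
        simp only [LinearMap.comp_apply] at h2
        rw [hχ_apply] at h2
        exact h2
      have h3 : g (θ' (d (i + 1) x)) = θ (d (i + 1) x) :=
        DFunLike.congr_fun hθ' (d (i + 1) x)
      simp [hu, h3, h4]
    -- factor `u` through `f`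
    set e := LinearEquiv.ofInjective f hfinj with he
    set h : P (i + 1) →ₗ[R] M :=
      (e.symm : _ →ₗ[R] _) ∘ₗ LinearMap.codRestrict (LinearMap.range f) u hu_range with hh
    have hfh : ∀ x, f (h x) = u x := by
      intro x
      have : e (h x) = ⟨u x, hu_range x⟩ := by
        simp [hh, LinearEquiv.apply_symm_apply]
        rfl
      have h5 : (e (h x) : I) = f (h x) := by
        rw [he]; rfl
      rw [this] at h5
      exact h5.symm
    refine ⟨h, LinearMap.ext fun z => ?_⟩
    apply hfinj
    have hz : (z : P (i + 1)) ∈ LinearMap.ker (d (i + 1)) := (hex i) ▸ z.2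
    have hdz : d (i + 1) (z : P (i + 1)) = 0 := hz
    have := hfh (z : P (i + 1))
    calc f ((h ∘ₗ (LinearMap.range (d i)).subtype) z) = u (z : P (i + 1)) := this
      _ = ψ (z : P (i + 1)) - θ' (d (i + 1) (z : P (i + 1))) := rfl
      _ = ψ (z : P (i + 1)) := by rw [hdz]; simp
      _ = f (φ z) := hψ z

/-- Every Gorenstein projective module with finite injective dimension is projective. -/
theorem projective_of_gorensteinProjective_of_finite_injDim (R : Type u) [Ring R]
    (G : ModuleCat.{u} R) (hG : IsGorensteinProjective R G)
    (hfin : ∃ n : ℕ, injDimLE R n G) :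
    Module.Projective R G := by
  obtain ⟨P, d, hproj, hex, ⟨e⟩, _⟩ := hG
  obtain ⟨n, hn⟩ := hfin
  obtain ⟨ψ, hψ⟩ := extend_of_injDimLE R P d hproj hex n G hn 0
    (e.symm : _ →ₗ[R] _)
  have := hproj (0 + 1)
  refine Module.Projective.of_split
    ((LinearMap.range (d 0)).subtype ∘ₗ (e : G →ₗ[R] _)) ψ ?_
  ext x
  have := DFunLike.congr_fun hψ (e x)
  simpa using this
end

section
/- For any ring R, every Gorenstein injective R-module with finite projective dimension is injective. -/
universe u

open CategoryTheory

section helpers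
variable {R : Type u} [Ring R]

lemma injective_of_retract' {G B : Type u} [AddCommGroup G] [Module R G]
    [AddCommGroup B] [Module R B] (hB : Module.Injective R B)
    (s : G →ₗ[R] B) (g : B →ₗ[R] G) (hgs : g ∘ₗ s = LinearMap.id) :
    Module.Injective R G := by
  constructor
  intro X Y _ _ _ _ i hi φ
  obtain ⟨Ψ, hΨ⟩ := hB.out i hi (s ∘ₗ φ)
  refine ⟨g ∘ₗ Ψ, fun x => ?_⟩
  have := LinearMap.congr_fun hgs (φ x)
  simpa [hΨ x] using this

variable (I : ℤ → ModuleCat.{u} R)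

/-- Cast along an equality of indices in a family of modules. -/
def fcast {a b : ℤ} (h : a = b) : (I a →ₗ[R] I b) := h ▸ LinearMap.id

lemma fcast_bijective {a b : ℤ} (h : a = b) : Function.Bijective (fcast I h) := by
  subst h; exact Function.bijective_id

lemma fcast_map (K : ∀ c : ℤ, Submodule R (I c)) {a b : ℤ} (h : a = b) :
    (K a).map (fcast I h) = K b := by
  subst h; exact Submodule.map_id _

lemma fcast_comap (K : ∀ c : ℤ, Submodule R (I c)) {a b : ℤ} (h : a = b) :
    (K b).comap (fcast I h) = K a := by
  subst h; exact Submodule.comap_id _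

end helpers

lemma factor_through_surjective {R : Type u} [Ring R] {P M B : Type u} [AddCommGroup P] [Module R P]
    [AddCommGroup M] [Module R M] [AddCommGroup B] [Module R B]
    (p : P →ₗ[R] M) (hp : Function.Surjective p)
    (q : P →ₗ[R] B) (h : LinearMap.ker p ≤ LinearMap.ker q) :
    ∃ s : M →ₗ[R] B, s ∘ₗ p = q := by
  refine ⟨(Submodule.liftQ _ q h) ∘ₗ (p.quotKerEquivOfSurjective hp).symm.toLinearMap, ?_⟩
  ext x
  have h1 : ((p.quotKerEquivOfSurjective hp).symm (p x)) = Submodule.Quotient.mk x := by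
    apply (p.quotKerEquivOfSurjective hp).injective
    simp [LinearMap.quotKerEquivOfSurjective, LinearMap.quotKerEquivRange_apply_mk]
  simp [h1, Submodule.liftQ_apply]

lemma splitting_claim {R : Type u} [Ring R] (n : ℕ) :
    ∀ (M : ModuleCat.{u} R), projDimLE R n M →
    ∀ (A E : ℕ → ModuleCat.{u} R)
      (π : ∀ i, E i →ₗ[R] A i) (ι : ∀ i, A (i + 1) →ₗ[R] E i),
      (∀ i, Module.Injective R (E i)) →
      (∀ i, Function.Surjective (π i)) →
      (∀ i, Function.Injective (ι i)) →
      (∀ i, LinearMap.range (ι i) = LinearMap.ker (π i)) →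
    ∀ (B : ModuleCat.{u} R) (f : A 0 →ₗ[R] B) (g : B →ₗ[R] M),
      Function.Injective f → Function.Surjective g →
      LinearMap.range f = LinearMap.ker g →
      ∃ s : M →ₗ[R] B, g ∘ₗ s = LinearMap.id := by
  induction n with
  | zero =>
    intro M hM A E π ι _ _ _ _ B f g _ hgsurj _
    haveI : Module.Projective R M := hM
    exact Module.projective_lifting_property g LinearMap.id hgsurj
  | succ n ih =>
    intro M hM A E π ι hEinj hπ hιinj hrk B f g hfinj hgsurj hrange
    obtain ⟨K, P, f', g', hPproj, hf'inj, hg'surj, hrk', hK⟩ := hM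
    haveI := hPproj
    obtain ⟨q, hq⟩ := Module.projective_lifting_property g g' hgsurj
    -- the map φ : K →ₗ A 0 with f ∘ φ = q ∘ f'
    have hmem : ∀ k : K, q (f' k) ∈ LinearMap.range f := by
      intro k
      rw [hrange, LinearMap.mem_ker]
      have h1 : g (q (f' k)) = g' (f' k) := LinearMap.congr_fun hq (f' k)
      have h2 : f' k ∈ LinearMap.ker g' := by
        rw [← hrk']; exact ⟨k, rfl⟩
      rw [h1]; exact h2
    set eA := LinearEquiv.ofInjective f hfinj with heA
    set φ : K →ₗ[R] A 0 :=
      eA.symm.toLinearMap ∘ₗ LinearMap.codRestrict (LinearMap.range f) (q ∘ₗ f') hmem with hφdef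
    have hφ : ∀ k, f (φ k) = q (f' k) := by
      intro k
      show f (eA.symm _) = _
      rw [heA, LinearEquiv.ofInjective_symm_apply]
      rfl
    -- the pullback of π 0 : E 0 ↠ A 0 along φ
    set L : (E 0 × K) →ₗ[R] A 0 :=
      (π 0) ∘ₗ LinearMap.fst R (E 0) K - φ ∘ₗ LinearMap.snd R (E 0) K with hLdef
    have hLmem : ∀ x : E 0 × K, x ∈ LinearMap.ker L ↔ π 0 x.1 = φ x.2 := by
      intro x
      rw [LinearMap.mem_ker, hLdef]
      simp only [LinearMap.sub_apply, LinearMap.coe_comp, Function.comp_apply,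
        LinearMap.fst_apply, LinearMap.snd_apply]
      exact sub_eq_zero
    have hmem'' : ∀ a : A 1, (LinearMap.inl R (E 0) K ∘ₗ ι 0) a ∈ LinearMap.ker L := by
      intro a
      rw [hLmem]
      have : ι 0 a ∈ LinearMap.ker (π 0) := by rw [← hrk 0]; exact ⟨a, rfl⟩
      simpa using this
    set f'' : A 1 →ₗ[R] LinearMap.ker L :=
      LinearMap.codRestrict (LinearMap.ker L) (LinearMap.inl R (E 0) K ∘ₗ ι 0) hmem'' with hf''def
    set g'' : LinearMap.ker L →ₗ[R] K :=
      LinearMap.snd R (E 0) K ∘ₗ (LinearMap.ker L).subtype with hg''def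
    have hf''inj : Function.Injective f'' := by
      intro a b hab
      apply hιinj 0
      have := congrArg (fun x : LinearMap.ker L => (x : E 0 × K).1) hab
      exact this
    have hg''surj : Function.Surjective g'' := by
      intro k
      obtain ⟨e0, he0⟩ := hπ 0 (φ k)
      exact ⟨⟨(e0, k), (hLmem _).2 he0⟩, rfl⟩
    have hrk'' : LinearMap.range f'' = LinearMap.ker g'' := by
      ext x
      simp only [LinearMap.mem_range, LinearMap.mem_ker]
      constructor
      · rintro ⟨a, rfl⟩
        rfl
      · intro hx
        have hx2 : (x : E 0 × K).2 = 0 := hx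
        have hx1 : π 0 (x : E 0 × K).1 = 0 := by
          have := (hLmem (x : E 0 × K)).1 x.2
          rw [hx2, map_zero] at this
          exact this
        have : (x : E 0 × K).1 ∈ LinearMap.range (ι 0) := by
          rw [hrk 0]; exact hx1
        obtain ⟨a, ha⟩ := this
        refine ⟨a, ?_⟩
        apply Subtype.ext
        show ((ι 0 a, 0) : E 0 × K) = _
        rw [ha, ← hx2]
    -- inductive hypothesis applied to K with the shifted chain
    obtain ⟨s', hs'⟩ := ih K hK (fun i => A (i + 1)) (fun i => E (i + 1))
      (fun i => π (i + 1)) (fun i => ι (i + 1)) (fun i => hEinj (i + 1))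
      (fun i => hπ (i + 1)) (fun i => hιinj (i + 1)) (fun i => hrk (i + 1))
      (ModuleCat.of R (LinearMap.ker L)) f'' g'' hf''inj hg''surj hrk''
    -- lift of φ through π 0
    set φt : K →ₗ[R] E 0 :=
      LinearMap.fst R (E 0) K ∘ₗ (LinearMap.ker L).subtype ∘ₗ s' with hφtdef
    have hφt : ∀ k, π 0 (φt k) = φ k := by
      intro k
      have h1 : g'' (s' k) = k := LinearMap.congr_fun hs' k
      have h2 := (hLmem ((LinearMap.ker L).subtype (s' k))).1 (Submodule.coe_mem (s' k))
      rw [show φ k = φ (g'' (s' k)) from by rw [h1]]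
      exact h2
    -- extend φt along f' : K ↪ P using injectivity of E 0
    obtain ⟨Φ, hΦ⟩ := (hEinj 0).out f' hf'inj φt
    set ψ : P →ₗ[R] A 0 := π 0 ∘ₗ Φ with hψdef
    set q' : P →ₗ[R] B := q - f ∘ₗ ψ with hq'def
    have hgq' : ∀ x, g (q' x) = g' x := by
      intro x
      have h1 : g (q x) = g' x := LinearMap.congr_fun hq x
      have h2 : g (f (ψ x)) = 0 := by
        have : f (ψ x) ∈ LinearMap.ker g := by rw [← hrange]; exact ⟨ψ x, rfl⟩
        exact this
      simp [hq'def, h1, h2]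
    have hker : LinearMap.ker g' ≤ LinearMap.ker q' := by
      intro x hx
      rw [← hrk'] at hx
      obtain ⟨k, rfl⟩ := hx
      show q (f' k) - f (ψ (f' k)) = 0
      rw [hψdef]
      show q (f' k) - f (π 0 (Φ (f' k))) = 0
      rw [hΦ k, hφt k, hφ k, sub_self]
    obtain ⟨s, hs⟩ := factor_through_surjective g' hg'surj q' hker
    refine ⟨s, ?_⟩
    ext m
    obtain ⟨x, rfl⟩ := hg'surj m
    have h1 : s (g' x) = q' x := LinearMap.congr_fun hs x
    show g (s (g' x)) = g' x
    rw [h1, hgq']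



/-- Every Gorenstein injective module with finite projective dimension is injective. -/
theorem injective_of_gorensteinInjective_of_finite_projDim (R : Type u) [Ring R]
    (G : ModuleCat.{u} R) (hG : IsGorensteinInjective R G)
    (hfin : ∃ n : ℕ, projDimLE R n G) :
    Module.Injective R G := by
  obtain ⟨I, d, hIinj, hex, ⟨e⟩, -⟩ := hG
  obtain ⟨n, hpd⟩ := hfin
  -- the chain of injective modules and image submodules to the left of `G`
  set A : ℕ → ModuleCat.{u} R :=
    fun i => ModuleCat.of R (LinearMap.range (d (-1 - (i : ℤ)))) with hAdef
  set E : ℕ → ModuleCat.{u} R := fun i => I (-1 - (i : ℤ)) with hEdef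
  set π : ∀ i, E i →ₗ[R] A i := fun i => (d (-1 - (i : ℤ))).rangeRestrict with hπdef
  have hcast : ∀ i : ℕ, (-1 - ((i + 1 : ℕ) : ℤ) + 1) = -1 - (i : ℤ) := by intro i; push_cast; ring
  set ι : ∀ i, A (i + 1) →ₗ[R] E i :=
    fun i => fcast I (hcast i) ∘ₗ (LinearMap.range (d (-1 - ((i + 1 : ℕ) : ℤ)))).subtype with hιdef
  have hEinj : ∀ i, Module.Injective R (E i) := fun i => hIinj _
  have hπs : ∀ i, Function.Surjective (π i) := fun i => (d _).surjective_rangeRestrict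
  have hιi : ∀ i, Function.Injective (ι i) :=
    fun i => (fcast_bijective I (hcast i)).1.comp (Submodule.injective_subtype _)
  have hrk : ∀ i, LinearMap.range (ι i) = LinearMap.ker (π i) := by
    intro i
    rw [hιdef, hπdef]
    rw [LinearMap.range_comp, Submodule.range_subtype, LinearMap.ker_rangeRestrict]
    rw [hex (-1 - ((i + 1 : ℕ) : ℤ))]
    exact fcast_map I (fun c => LinearMap.ker (d c)) (hcast i)
  -- the short exact sequence 0 → A 0 → B → G → 0
  set B : ModuleCat.{u} R := I (-1 - ((0 : ℕ) : ℤ) + 1) with hBdef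
  set f : A 0 →ₗ[R] B := (LinearMap.range (d (-1 - ((0 : ℕ) : ℤ)))).subtype with hfdef
  have h0 : (-1 - ((0 : ℕ) : ℤ) + 1) = 0 := by norm_num
  set g : B →ₗ[R] G :=
    e.symm.toLinearMap ∘ₗ (d 0).rangeRestrict ∘ₗ fcast I h0 with hgdef
  have hfinj : Function.Injective f := Submodule.injective_subtype _
  have hgsurj : Function.Surjective g := by
    rw [hgdef]
    exact e.symm.surjective.comp
      ((d 0).surjective_rangeRestrict.comp (fcast_bijective I h0).2)
  have hrange : LinearMap.range f = LinearMap.ker g := by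
    rw [hfdef, hgdef]
    rw [Submodule.range_subtype]
    rw [LinearMap.ker_comp, LinearEquiv.ker, Submodule.comap_bot, LinearMap.ker_comp,
      LinearMap.ker_rangeRestrict]
    rw [hex (-1 - ((0 : ℕ) : ℤ))]
    exact (fcast_comap I (fun c => LinearMap.ker (d c)) h0).symm
  obtain ⟨s, hs⟩ := splitting_claim n G hpd A E π ι hEinj hπs hιi hrk B f g hfinj hgsurj hrange
  exact injective_of_retract' (hIinj _) s g hs
end
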